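/- arXiv:1505.02362 — 5 statements merged into one kernel-verified Lean document; each statement's English description precedes it below -/
import Mathlib

section
/- Fix an integer W ≥ 2, real numbers a > 0 and b > 0, and an index i ∈ {1,…,W}. Consider the optimization over probability vectors λ on {1,…,W} (i.e., λ(j) ≥ 0 for all j and Σ_{j=1}^{W} λ(j) = 1) of the quantity min_{j ≠ i} ( λ(i)·a + λ(j)·b ). Then: (1) if a > b/(W−1), the supremum over all probability vectors λ of min_{j ≠ i} ( λ(i)·a + λ(j)·b ) equals a, and it is attained by λ with λ(i) = 1 and λ(j) = 0 for all j ≠ i; (2) if a ≤ b/(W−1), the supremum equals b/(W−1), and it is attained by λ with λ(i) = 0 and λ(j) = 1/(W−1) for all j ≠ i. -/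
/-- The quantity `min_{j ≠ i} (λ(i)·a + λ(j)·b)` for a weight vector `l` on `Fin W`. -/
noncomputable def oddballVal (W : ℕ) (hW : 2 ≤ W) (a b : ℝ) (i : Fin W)
    (l : Fin W → ℝ) : ℝ :=
  (Finset.univ.erase i).inf'
    (by
      apply Finset.card_pos.mp
      rw [Finset.card_erase_of_mem (Finset.mem_univ i), Finset.card_univ, Fintype.card_fin]
      omega)
    (fun j => l i * a + l j * b)

lemma erase_card (W : ℕ) (hW : 2 ≤ W) (i : Fin W) :
    ((Finset.univ : Finset (Fin W)).erase i).card = W - 1 := by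
  rw [Finset.card_erase_of_mem (Finset.mem_univ i), Finset.card_univ, Fintype.card_fin]

lemma erase_nonempty (W : ℕ) (hW : 2 ≤ W) (i : Fin W) :
    ((Finset.univ : Finset (Fin W)).erase i).Nonempty := by
  apply Finset.card_pos.mp
  rw [erase_card W hW i]; omega

lemma oddball_bound (W : ℕ) (hW : 2 ≤ W) (a b : ℝ) (hb : 0 < b) (i : Fin W)
    (l : Fin W → ℝ) (hl : ∀ j, 0 ≤ l j) (hs : ∑ j, l j = 1) :
    oddballVal W hW a b i l ≤ l i * a + (1 - l i) * (b / ((W : ℝ) - 1)) := by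
  have hc : (0:ℝ) < (W : ℝ) - 1 := by
    have : (2:ℝ) ≤ (W : ℝ) := by exact_mod_cast hW
    linarith
  have hsum : ∑ j ∈ Finset.univ.erase i, l j = 1 - l i := by
    have := Finset.add_sum_erase Finset.univ l (Finset.mem_univ i)
    linarith [hs ▸ this]
  have hconst : ∑ _j ∈ Finset.univ.erase i, (1 - l i) / ((W : ℝ) - 1) = 1 - l i := by
    rw [Finset.sum_const, erase_card W hW i, nsmul_eq_mul]
    have : ((W - 1 : ℕ) : ℝ) = (W : ℝ) - 1 := by
      have : (1:ℕ) ≤ W := by omega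
      push_cast [this]; ring
    rw [this]; field_simp
  obtain ⟨j, hj, hjle⟩ := Finset.exists_le_of_sum_le (erase_nonempty W hW i)
    (le_of_eq (hsum.trans hconst.symm))
  have h1 : oddballVal W hW a b i l ≤ l i * a + l j * b :=
    Finset.inf'_le _ hj
  have h2 : l j * b ≤ (1 - l i) * (b / ((W : ℝ) - 1)) := by
    have : l j * b ≤ ((1 - l i) / ((W : ℝ) - 1)) * b :=
      mul_le_mul_of_nonneg_right hjle hb.le
    calc l j * b ≤ ((1 - l i) / ((W : ℝ) - 1)) * b := this
      _ = (1 - l i) * (b / ((W : ℝ) - 1)) := by ring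
  linarith

lemma li_le_one (W : ℕ) (i : Fin W) (l : Fin W → ℝ) (hl : ∀ j, 0 ≤ l j)
    (hs : ∑ j, l j = 1) : l i ≤ 1 := by
  rw [← hs]
  exact Finset.single_le_sum (fun j _ => hl j) (Finset.mem_univ i)

theorem stmt_0 (W : ℕ) (hW : 2 ≤ W) (a b : ℝ) (ha : 0 < a) (hb : 0 < b) (i : Fin W) :
    (a > b / ((W : ℝ) - 1) →
      (∀ l : Fin W → ℝ, (∀ j, 0 ≤ l j) → ∑ j, l j = 1 →
        oddballVal W hW a b i l ≤ a) ∧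
      (∀ j : Fin W, (0 : ℝ) ≤ if j = i then 1 else 0) ∧
      (∑ j : Fin W, (if j = i then (1 : ℝ) else 0)) = 1 ∧
      oddballVal W hW a b i (fun j => if j = i then 1 else 0) = a) ∧
    (a ≤ b / ((W : ℝ) - 1) →
      (∀ l : Fin W → ℝ, (∀ j, 0 ≤ l j) → ∑ j, l j = 1 →
        oddballVal W hW a b i l ≤ b / ((W : ℝ) - 1)) ∧
      (∀ j : Fin W, (0 : ℝ) ≤ if j = i then 0 else 1 / ((W : ℝ) - 1)) ∧
      (∑ j : Fin W, (if j = i then (0 : ℝ) else 1 / ((W : ℝ) - 1))) = 1 ∧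
      oddballVal W hW a b i (fun j => if j = i then 0 else 1 / ((W : ℝ) - 1)) =
        b / ((W : ℝ) - 1)) := by
  have hc : (0:ℝ) < (W : ℝ) - 1 := by
    have : (2:ℝ) ≤ (W : ℝ) := by exact_mod_cast hW
    linarith
  have hcard : ((W - 1 : ℕ) : ℝ) = (W : ℝ) - 1 := by
    have h1 : (1:ℕ) ≤ W := by omega
    push_cast [h1]; ring
  have hne := erase_nonempty W hW i
  constructor
  · intro hgt
    refine ⟨?_, ?_, ?_, ?_⟩
    · intro l hl hs
      have hB := oddball_bound W hW a b hb i l hl hs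
      have h1 := li_le_one W i l hl hs
      have h0 := hl i
      nlinarith
    · intro j; split <;> norm_num
    · simp
    · have : oddballVal W hW a b i (fun j => if j = i then 1 else 0)
          = (Finset.univ.erase i).inf' hne (fun _ => a) := by
        unfold oddballVal
        apply Finset.inf'_congr _ rfl
        intro j hj
        simp [Finset.ne_of_mem_erase hj]
      rw [this, Finset.inf'_const]
  · intro hle
    refine ⟨?_, ?_, ?_, ?_⟩
    · intro l hl hs
      have hB := oddball_bound W hW a b hb i l hl hs
      have h1 := li_le_one W i l hl hs
      have h0 := hl i
      nlinarith
    · intro j; split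
      · norm_num
      · positivity
    · rw [← Finset.add_sum_erase _ _ (Finset.mem_univ i)]
      have h1 : ∀ j ∈ Finset.univ.erase i,
          (if j = i then (0:ℝ) else 1 / ((W : ℝ) - 1)) = 1 / ((W : ℝ) - 1) :=
        fun j hj => if_neg (Finset.ne_of_mem_erase hj)
      rw [Finset.sum_congr rfl h1, Finset.sum_const, erase_card W hW i, nsmul_eq_mul, hcard,
        if_pos rfl]
      field_simp
      norm_num
    · have : oddballVal W hW a b i (fun j => if j = i then 0 else 1 / ((W : ℝ) - 1))
          = (Finset.univ.erase i).inf' hne (fun _ => b / ((W : ℝ) - 1)) := by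
        unfold oddballVal
        apply Finset.inf'_congr _ rfl
        intro j hj
        beta_reduce
        rw [if_pos rfl, if_neg (Finset.ne_of_mem_erase hj)]
        ring
      rw [this, Finset.inf'_const]
end

section
/- Fix an integer W ≥ 3, real numbers a > 0 and b > 0 with a > b/(W−1), and an index i ∈ {1,…,W}. For a probability vector λ on {1,…,W} and each j ∈ {1,…,2W} with j ≠ i, define c_j(λ) = λ(i)·a + λ(j)·b if j ≤ W and j ≠ i; c_j(λ) = λ(i)·a + (1−λ(i))·b if j = i+W; and c_j(λ) = (1 − λ(i) − λ(j−W))·b if j > W and j ≠ i+W. Then the supremum over all probability vectors λ on {1,…,W} of min_{j ∈ {1,…,2W}, j ≠ i} c_j(λ) equals (W−2)·a·b / ( (W−1)·a + (W−3)·b ), and it is attained by the probability vector λ with λ(i) = (W−3)·b / ( (W−1)·a + (W−3)·b ) and λ(j) = a / ( (W−1)·a + (W−3)·b ) for every j ≠ i, 1 ≤ j ≤ W. -/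
/-- The quantity `c_j(λ)` from Case 2 of the visual search problem (zero-based indexing:
locations are `0,…,W−1`, hypotheses are `0,…,2W−1`). -/
noncomputable def cFun (W : ℕ) (a b : ℝ) (i : ℕ) (l : ℕ → ℝ) (j : ℕ) : ℝ :=
  if j < W then l i * a + l j * b
  else if j = i + W then l i * a + (1 - l i) * b
  else (1 - l i - l (j - W)) * b

/-- `min_{j ∈ {0,…,2W−1}, j ≠ i} c_j(λ)`. -/
noncomputable def minC (W : ℕ) (hW : 3 ≤ W) (a b : ℝ) (i : ℕ) (hi : i < W)
    (l : ℕ → ℝ) : ℝ :=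
  ((Finset.range (2 * W)).erase i).inf'
    (by
      apply Finset.card_pos.mp
      rw [Finset.card_erase_of_mem (Finset.mem_range.mpr (by omega)), Finset.card_range]
      omega)
    (cFun W a b i l)

theorem stmt_1 (W : ℕ) (hW : 3 ≤ W) (a b : ℝ) (ha : 0 < a) (hb : 0 < b)
    (hab : a > b / ((W : ℝ) - 1)) (i : ℕ) (hi : i < W) :
    (∀ l : ℕ → ℝ, (∀ j, j < W → 0 ≤ l j) → (∑ j ∈ Finset.range W, l j) = 1 →
      minC W hW a b i hi l ≤
        ((W : ℝ) - 2) * a * b / (((W : ℝ) - 1) * a + ((W : ℝ) - 3) * b)) ∧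
    (∀ j, j < W → (0 : ℝ) ≤
      if j = i then ((W : ℝ) - 3) * b / (((W : ℝ) - 1) * a + ((W : ℝ) - 3) * b)
      else a / (((W : ℝ) - 1) * a + ((W : ℝ) - 3) * b)) ∧
    (∑ j ∈ Finset.range W,
      (if j = i then ((W : ℝ) - 3) * b / (((W : ℝ) - 1) * a + ((W : ℝ) - 3) * b)
       else a / (((W : ℝ) - 1) * a + ((W : ℝ) - 3) * b))) = 1 ∧
    minC W hW a b i hi
      (fun j => if j = i then ((W : ℝ) - 3) * b / (((W : ℝ) - 1) * a + ((W : ℝ) - 3) * b)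
                else a / (((W : ℝ) - 1) * a + ((W : ℝ) - 3) * b)) =
      ((W : ℝ) - 2) * a * b / (((W : ℝ) - 1) * a + ((W : ℝ) - 3) * b) := by
  have hW3 : (3:ℝ) ≤ (W:ℝ) := by exact_mod_cast hW
  have hW1 : (0:ℝ) < (W:ℝ) - 1 := by linarith
  have hbD : b < ((W:ℝ) - 1) * a := by
    rw [gt_iff_lt, div_lt_iff₀ hW1] at hab; linarith
  set D : ℝ := ((W : ℝ) - 1) * a + ((W : ℝ) - 3) * b with hDdef
  have hD : 0 < D := by nlinarith
  have hV0 : (0:ℝ) ≤ ((W : ℝ) - 2) * a * b / D :=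
    div_nonneg (mul_nonneg (mul_nonneg (by linarith) ha.le) hb.le) hD.le
  have hiW : i ∈ Finset.range W := Finset.mem_range.mpr hi
  refine ⟨?_, ?_, ?_, ?_⟩
  · -- upper bound for arbitrary l
    intro l _hnn hsum
    set m := minC W hW a b i hi l with hm
    set S1 := (Finset.range W).erase i with hS1
    have hcard : S1.card = W - 1 := by
      rw [hS1, Finset.card_erase_of_mem hiW, Finset.card_range]
    have hsumS1 : ∑ j ∈ S1, l j = 1 - l i := by
      rw [hS1, Finset.sum_erase_eq_sub hiW, hsum]
    set α : ℝ := ((W:ℝ) - 2) * b with hα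
    set β : ℝ := ((W:ℝ) - 1) * a - b with hβ
    have hα0 : 0 ≤ α := by nlinarith
    have hβ0 : 0 ≤ β := by linarith
    have key : ∀ j ∈ S1, (α + β) * m ≤
        α * (l i * a + l j * b) + β * ((1 - l i - l j) * b) := by
      intro j hj
      rw [hS1, Finset.mem_erase, Finset.mem_range] at hj
      have h1 : m ≤ l i * a + l j * b := by
        have hmem : j ∈ (Finset.range (2 * W)).erase i := by
          rw [Finset.mem_erase, Finset.mem_range]; omega
        have hle := Finset.inf'_le (cFun W a b i l) hmem
        rw [hm, minC]
        exact le_of_le_of_eq hle (by simp [cFun, hj.2])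
      have h2 : m ≤ (1 - l i - l j) * b := by
        have hmem : j + W ∈ (Finset.range (2 * W)).erase i := by
          rw [Finset.mem_erase, Finset.mem_range]; omega
        have hle := Finset.inf'_le (cFun W a b i l) hmem
        rw [hm, minC]
        have hne : ¬ (j + W < W) := by omega
        have hne2 : j + W ≠ i + W := by omega
        exact le_of_le_of_eq hle (by simp [cFun, hne, hne2, hj.1])
      nlinarith [mul_le_mul_of_nonneg_left h1 hα0, mul_le_mul_of_nonneg_left h2 hβ0]
    have hsumle : ∑ _j ∈ S1, (α + β) * m ≤
        ∑ j ∈ S1, (α * (l i * a + l j * b) + β * ((1 - l i - l j) * b)) :=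
      Finset.sum_le_sum key
    have hcardR : ((S1.card : ℝ)) = (W:ℝ) - 1 := by
      rw [hcard]; push_cast [Nat.cast_sub (by omega : 1 ≤ W)]; ring
    have hLHS : ∑ _j ∈ S1, (α + β) * m = ((W:ℝ) - 1) * ((α + β) * m) := by
      rw [Finset.sum_const, nsmul_eq_mul, hcardR]
    have hRHS : ∑ j ∈ S1, (α * (l i * a + l j * b) + β * ((1 - l i - l j) * b))
        = ((W:ℝ) - 1) * (α * (l i * a) + β * ((1 - l i) * b))
          + (1 - l i) * (α * b - β * b) := by
      have hcong : ∀ j ∈ S1, α * (l i * a + l j * b) + β * ((1 - l i - l j) * b)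
          = (α * (l i * a) + β * ((1 - l i) * b)) + l j * (α * b - β * b) := by
        intro j _; ring
      rw [Finset.sum_congr rfl hcong, Finset.sum_add_distrib, Finset.sum_const,
        ← Finset.sum_mul, hsumS1, nsmul_eq_mul, hcardR]
    have hmain : ((W:ℝ) - 1) * ((α + β) * m) ≤ ((W:ℝ) - 1) * (((W:ℝ) - 2) * a * b) := by
      have hident : ((W:ℝ) - 1) * (α * (l i * a) + β * ((1 - l i) * b))
          + (1 - l i) * (α * b - β * b) = ((W:ℝ) - 1) * (((W:ℝ) - 2) * a * b) := by
        rw [hα, hβ]; ring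
      rw [← hident]
      calc ((W:ℝ) - 1) * ((α + β) * m) = ∑ _j ∈ S1, (α + β) * m := hLHS.symm
        _ ≤ _ := hsumle
        _ = _ := hRHS
    have hdiv : (α + β) * m ≤ ((W:ℝ) - 2) * a * b :=
      le_of_mul_le_mul_left (by linarith [hmain]) hW1
    rw [le_div_iff₀ hD]
    have hαβ : α + β = D := by rw [hα, hβ, hDdef]; ring
    have hmd : m * D = (α + β) * m := by rw [hαβ]; ring
    linarith [hdiv, hmd]
  · -- nonnegativity of the optimal vector
    intro j _hj
    by_cases h : j = i
    · rw [if_pos h]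
      exact div_nonneg (by nlinarith) hD.le
    · rw [if_neg h]
      exact div_nonneg ha.le hD.le
  · -- sums to one
    rw [← Finset.insert_erase hiW, Finset.sum_insert (Finset.notMem_erase i _),
      if_pos rfl]
    have hcong : ∀ j ∈ (Finset.range W).erase i,
        (if j = i then ((W : ℝ) - 3) * b / D else a / D) = a / D := by
      intro j hj
      rw [if_neg (Finset.ne_of_mem_erase hj)]
    rw [Finset.sum_congr rfl hcong, Finset.sum_const, nsmul_eq_mul,
      Finset.card_erase_of_mem hiW, Finset.card_range]
    push_cast [Nat.cast_sub (by omega : 1 ≤ W)]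
    field_simp
    ring
  · -- value at the optimal vector
    set lopt : ℕ → ℝ := fun j => if j = i then ((W : ℝ) - 3) * b / D else a / D
      with hlopt
    have hli : lopt i = ((W : ℝ) - 3) * b / D := by rw [hlopt]; simp
    have hlj : ∀ j, j ≠ i → lopt j = a / D := by
      intro j hj; rw [hlopt]; simp [hj]
    have hval1 : ∀ j, j < W → j ≠ i → cFun W a b i lopt j = ((W:ℝ) - 2) * a * b / D := by
      intro j hjW hji
      rw [cFun, if_pos hjW, hli, hlj j hji]
      field_simp
      ring
    apply le_antisymm
    · -- inf' ≤ value at some specific index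
      obtain ⟨j0, hj0W, hj0i⟩ : ∃ j0, j0 < W ∧ j0 ≠ i := by
        rcases Nat.eq_zero_or_pos i with h | h
        · exact ⟨1, by omega, by omega⟩
        · exact ⟨0, by omega, by omega⟩
      have hmem : j0 ∈ (Finset.range (2 * W)).erase i := by
        rw [Finset.mem_erase, Finset.mem_range]; omega
      rw [minC]
      exact le_of_le_of_eq (Finset.inf'_le _ hmem) (hval1 j0 hj0W hj0i)
    · rw [minC]
      apply Finset.le_inf'
      intro j hj
      rw [Finset.mem_erase, Finset.mem_range] at hj
      obtain ⟨hji, hj2W⟩ := hj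
      by_cases h1 : j < W
      · exact (hval1 j h1 hji).ge
      · by_cases h2 : j = i + W
        · have heq : ((W : ℝ) - 3) * b / D * a + (1 - ((W : ℝ) - 3) * b / D) * b
              = 2 * (((W:ℝ) - 2) * a * b / D) := by
            have hDne : D ≠ 0 := hD.ne'
            field_simp
            rw [hDdef]; ring
          rw [cFun, if_neg h1, if_pos h2, hli, heq]
          linarith [hV0]
        · have hsub : j - W < W := by omega
          have hsubne : j - W ≠ i := by omega
          have heq : (1 - ((W : ℝ) - 3) * b / D - a / D) * b
              = ((W:ℝ) - 2) * a * b / D := by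
            have hDne : D ≠ 0 := hD.ne'
            field_simp
            rw [hDdef]; ring
          rw [cFun, if_neg h1, if_neg h2, hli, hlj _ hsubne, heq]
end

section
/- Fix an integer W ≥ 3, real numbers a > 0 and b > 0 with a ≤ b/(W−1), and an index i ∈ {1,…,W}. For a probability vector λ on {1,…,W} and each j ∈ {1,…,2W} with j ≠ i, define c_j(λ) = λ(i)·a + λ(j)·b if j ≤ W and j ≠ i; c_j(λ) = λ(i)·a + (1−λ(i))·b if j = i+W; and c_j(λ) = (1 − λ(i) − λ(j−W))·b if j > W and j ≠ i+W. Then the supremum over all probability vectors λ on {1,…,W} of min_{j ∈ {1,…,2W}, j ≠ i} c_j(λ) equals b/(W−1), and it is attained by the probability vector λ with λ(i) = 0 and λ(j) = 1/(W−1) for every j ≠ i, 1 ≤ j ≤ W. -/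
theorem stmt_2 (W : ℕ) (hW : 3 ≤ W) (a b : ℝ) (ha : 0 < a) (hb : 0 < b)
    (hab : a ≤ b / ((W : ℝ) - 1)) (i : ℕ) (hi : i < W) :
    (∀ l : ℕ → ℝ, (∀ j, j < W → 0 ≤ l j) → (∑ j ∈ Finset.range W, l j) = 1 →
      minC W hW a b i hi l ≤ b / ((W : ℝ) - 1)) ∧
    (∀ j, j < W → (0 : ℝ) ≤ if j = i then 0 else 1 / ((W : ℝ) - 1)) ∧
    (∑ j ∈ Finset.range W, (if j = i then (0 : ℝ) else 1 / ((W : ℝ) - 1))) = 1 ∧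
    minC W hW a b i hi (fun j => if j = i then 0 else 1 / ((W : ℝ) - 1)) =
      b / ((W : ℝ) - 1) := by
  have hW3 : (3:ℝ) ≤ (W:ℝ) := by exact_mod_cast hW
  have he : (0:ℝ) < (W:ℝ) - 1 := by linarith
  have hcardW : ((Finset.range W).erase i).card = W - 1 := by
    rw [Finset.card_erase_of_mem (Finset.mem_range.mpr hi), Finset.card_range]
  have hcast : ((W - 1 : ℕ) : ℝ) = (W:ℝ) - 1 := by
    have : (1:ℕ) ≤ W := by omega
    push_cast [Nat.cast_sub this]
    ring
  refine ⟨?_, ?_, ?_, ?_⟩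
  · intro l hpos hsum
    have hS : ((Finset.range W).erase i).Nonempty := by
      apply Finset.card_pos.mp
      rw [hcardW]; omega
    obtain ⟨j0, hj0S, hj0min⟩ := Finset.exists_min_image _ l hS
    obtain ⟨hj0i, hj0W'⟩ := Finset.mem_erase.mp hj0S
    have hj0W : j0 < W := Finset.mem_range.mp hj0W'
    have hsum' : l i + ∑ j ∈ (Finset.range W).erase i, l j = 1 := by
      rw [Finset.add_sum_erase _ _ (Finset.mem_range.mpr hi)]; exact hsum
    have hbound : ((W:ℝ) - 1) * l j0 ≤ 1 - l i := by
      have h1 : ∑ _j ∈ (Finset.range W).erase i, l j0 ≤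
          ∑ j ∈ (Finset.range W).erase i, l j :=
        Finset.sum_le_sum (fun j hj => hj0min j hj)
      rw [Finset.sum_const, hcardW, nsmul_eq_mul, hcast] at h1
      linarith
    have hli0 : 0 ≤ l i := hpos i hi
    have hli1 : l i ≤ 1 := by
      have h2 : 0 ≤ ∑ j ∈ (Finset.range W).erase i, l j :=
        Finset.sum_nonneg fun j hj =>
          hpos j (Finset.mem_range.mp (Finset.mem_erase.mp hj).2)
      linarith
    have hle : minC W hW a b i hi l ≤ cFun W a b i l j0 :=
      Finset.inf'_le _ (Finset.mem_erase.mpr ⟨hj0i, Finset.mem_range.mpr (by omega)⟩)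
    have hc : cFun W a b i l j0 = l i * a + l j0 * b := by
      unfold cFun; rw [if_pos hj0W]
    rw [hc] at hle
    have h3 : l i * a ≤ l i * (b/((W:ℝ)-1)) := mul_le_mul_of_nonneg_left hab hli0
    have hja : l j0 ≤ (1 - l i) / ((W:ℝ) - 1) := by
      rw [le_div_iff₀ he]; nlinarith
    have h4 : l j0 * b ≤ (1 - l i)/((W:ℝ)-1) * b := mul_le_mul_of_nonneg_right hja hb.le
    have h5 : l i * (b/((W:ℝ)-1)) + (1 - l i)/((W:ℝ)-1) * b = b/((W:ℝ)-1) := by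
      field_simp
      ring
    linarith
  · intro j hj
    split
    · exact le_refl 0
    · positivity
  · rw [← Finset.add_sum_erase _ _ (Finset.mem_range.mpr hi), if_pos rfl]
    rw [Finset.sum_congr rfl (fun j hj => if_neg (Finset.mem_erase.mp hj).1)]
    rw [Finset.sum_const, hcardW, nsmul_eq_mul, hcast]
    field_simp
    norm_num
  · set l : ℕ → ℝ := fun j => if j = i then 0 else 1 / ((W : ℝ) - 1) with hl
    have hli : l i = 0 := if_pos rfl
    apply le_antisymm
    · set j1 : ℕ := if i = 0 then 1 else 0 with hj1
      have hj1W : j1 < W := by simp only [hj1]; split <;> omega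
      have hj1i : j1 ≠ i := by simp only [hj1]; split <;> omega
      have hmem : j1 ∈ (Finset.range (2*W)).erase i :=
        Finset.mem_erase.mpr ⟨hj1i, Finset.mem_range.mpr (by omega)⟩
      have hval : cFun W a b i l j1 = b / ((W:ℝ)-1) := by
        unfold cFun
        rw [if_pos hj1W, hli]
        have : l j1 = 1 / ((W:ℝ)-1) := if_neg hj1i
        rw [this]
        ring
      calc minC W hW a b i hi l ≤ cFun W a b i l j1 := Finset.inf'_le _ hmem
        _ = b / ((W:ℝ)-1) := hval
    · apply Finset.le_inf'
      intro j hj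
      obtain ⟨hji, hjr⟩ := Finset.mem_erase.mp hj
      have hj2W : j < 2*W := Finset.mem_range.mp hjr
      unfold cFun
      split
      · have : l j = 1 / ((W:ℝ)-1) := if_neg hji
        rw [this, hli]
        ring_nf
        exact le_refl _
      · split
        · rw [hli]
          rw [div_le_iff₀ he]
          nlinarith
        · next hjW hjiW =>
          have hjW' : W ≤ j := by omega
          have hsub : j - W ≠ i := by omega
          have : l (j - W) = 1 / ((W:ℝ)-1) := if_neg hsub
          rw [this, hli]
          rw [div_le_iff₀ he]
          have h1e : 1 / ((W:ℝ)-1) * ((W:ℝ)-1) = 1 := by field_simp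
          nlinarith
end

section
/- Fix an integer W ≥ 3, real numbers a > 0 and b > 0, and an index i ∈ {1,…,W}. For a probability vector λ on {1,…,W} and each j ∈ {1,…,2W}, j ≠ i, define c_j(λ) as: λ(i)·a + λ(j)·b if j ≤ W and j ≠ i; λ(i)·a + (1−λ(i))·b if j = i+W; and (1 − λ(i) − λ(j−W))·b if j > W and j ≠ i+W. Then the supremum over all probability vectors λ on {1,…,W} of min_{j ≠ i} c_j(λ) equals the supremum over t ∈ [0,1] of min{ t·a + (1−t)·b/(W−1) , (1−t)·(W−2)·b/(W−1) }. In particular, for any fixed value t of λ(i), distributing the remaining mass 1−t uniformly over the W−1 actions j ≠ i is optimal. -/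
lemma minC_le (W : ℕ) (hW : 3 ≤ W) (a b : ℝ) (hb : 0 < b)
    (i : ℕ) (hi : i < W) (l : ℕ → ℝ) (hl : ∀ j, j < W → 0 ≤ l j)
    (hsum : ∑ j ∈ Finset.range W, l j = 1) :
    minC W hW a b i hi l ≤
      min (l i * a + (1 - l i) * b / ((W:ℝ) - 1))
          ((1 - l i) * ((W:ℝ) - 2) * b / ((W:ℝ) - 1)) := by
  have hWr : (3:ℝ) ≤ (W:ℝ) := by exact_mod_cast hW
  have hW1 : (0:ℝ) < (W:ℝ) - 1 := by linarith
  set S := (Finset.range W).erase i with hS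
  have hiS : i ∈ Finset.range W := Finset.mem_range.mpr hi
  have hcard : S.card = W - 1 := by
    rw [hS, Finset.card_erase_of_mem hiS, Finset.card_range]
  have hcardr : ((S.card : ℝ)) = (W:ℝ) - 1 := by
    rw [hcard]; push_cast [Nat.cast_sub (by omega : 1 ≤ W)]; ring
  have hSsum : ∑ j ∈ S, l j = 1 - l i := by
    have h := Finset.add_sum_erase (Finset.range W) l hiS
    rw [hsum] at h; rw [hS]; linarith
  have hSne : S.Nonempty := Finset.card_pos.mp (by omega)
  have hconst : ∑ _j ∈ S, (1 - l i)/((W:ℝ)-1) = 1 - l i := by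
    rw [Finset.sum_const, nsmul_eq_mul, hcardr]; field_simp
  obtain ⟨j₀, hj₀S, hj₀⟩ := Finset.exists_le_of_sum_le hSne
    (le_of_eq (hSsum.trans hconst.symm))
  obtain ⟨j₁, hj₁S, hj₁⟩ := Finset.exists_le_of_sum_le hSne
    (le_of_eq (hconst.trans hSsum.symm))
  have hj₀i : j₀ ≠ i := (Finset.mem_erase.mp hj₀S).1
  have hj₀W : j₀ < W := Finset.mem_range.mp (Finset.mem_erase.mp hj₀S).2
  have hj₁i : j₁ ≠ i := (Finset.mem_erase.mp hj₁S).1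
  have hj₁W : j₁ < W := Finset.mem_range.mp (Finset.mem_erase.mp hj₁S).2
  have h0 : minC W hW a b i hi l ≤ l i * a + (1 - l i) * b / ((W:ℝ)-1) := by
    have hmem : j₀ ∈ (Finset.range (2*W)).erase i :=
      Finset.mem_erase.mpr ⟨hj₀i, Finset.mem_range.mpr (by omega)⟩
    have h1 : minC W hW a b i hi l ≤ cFun W a b i l j₀ := Finset.inf'_le _ hmem
    have h2 : cFun W a b i l j₀ = l i * a + l j₀ * b := by
      rw [cFun, if_pos hj₀W]
    have h3 : l j₀ * b ≤ (1 - l i)/((W:ℝ)-1) * b :=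
      mul_le_mul_of_nonneg_right hj₀ hb.le
    have h4 : (1 - l i) * b / ((W:ℝ)-1) = (1 - l i)/((W:ℝ)-1) * b := by ring
    rw [h4]; rw [h2] at h1; linarith
  have h1 : minC W hW a b i hi l ≤ (1 - l i) * ((W:ℝ)-2) * b / ((W:ℝ)-1) := by
    have hmem : j₁ + W ∈ (Finset.range (2*W)).erase i :=
      Finset.mem_erase.mpr ⟨by omega, Finset.mem_range.mpr (by omega)⟩
    have h1 : minC W hW a b i hi l ≤ cFun W a b i l (j₁ + W) := Finset.inf'_le _ hmem
    have h2 : cFun W a b i l (j₁ + W) = (1 - l i - l j₁) * b := by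
      rw [cFun, if_neg (by omega), if_neg (by omega), Nat.add_sub_cancel]
    have hne : ((W:ℝ)-1) ≠ 0 := by linarith
    have key : (1 - l i - (1 - l i)/((W:ℝ)-1)) * b = (1 - l i) * ((W:ℝ)-2) * b / ((W:ℝ)-1) := by
      field_simp
      ring
    have h3 : (1 - l i - l j₁) * b ≤ (1 - l i - (1 - l i)/((W:ℝ)-1)) * b :=
      mul_le_mul_of_nonneg_right (by linarith) hb.le
    rw [h2] at h1; linarith [key ▸ h3]
  exact le_min h0 h1

lemma unif_sum (W : ℕ) (hW : 3 ≤ W) (i : ℕ) (hi : i < W) (t : ℝ) :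
    ∑ j ∈ Finset.range W, (if j = i then t else (1-t)/((W:ℝ)-1)) = 1 := by
  have hiS : i ∈ Finset.range W := Finset.mem_range.mpr hi
  have hWr : (3:ℝ) ≤ (W:ℝ) := by exact_mod_cast hW
  rw [← Finset.add_sum_erase _ _ hiS, if_pos rfl]
  have h : ∑ j ∈ (Finset.range W).erase i, (if j = i then t else (1-t)/((W:ℝ)-1))
       = ∑ _j ∈ (Finset.range W).erase i, (1-t)/((W:ℝ)-1) :=
    Finset.sum_congr rfl fun j hj => if_neg (Finset.mem_erase.mp hj).1
  rw [h, Finset.sum_const, Finset.card_erase_of_mem hiS, Finset.card_range, nsmul_eq_mul]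
  have hc : ((W - 1 : ℕ):ℝ) = (W:ℝ) - 1 := by
    push_cast [Nat.cast_sub (by omega : 1 ≤ W)]; ring
  rw [hc]
  have hne : ((W:ℝ)-1) ≠ 0 := by linarith
  field_simp
  ring

lemma minC_unif (W : ℕ) (hW : 3 ≤ W) (a b : ℝ) (hb : 0 < b)
    (i : ℕ) (hi : i < W) (t : ℝ) (ht0 : 0 ≤ t) (ht1 : t ≤ 1) :
    minC W hW a b i hi (fun j => if j = i then t else (1-t)/((W:ℝ)-1)) =
      min (t * a + (1 - t) * b / ((W:ℝ) - 1))
          ((1 - t) * ((W:ℝ) - 2) * b / ((W:ℝ) - 1)) := by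
  have hWr : (3:ℝ) ≤ (W:ℝ) := by exact_mod_cast hW
  have hW1 : (0:ℝ) < (W:ℝ) - 1 := by linarith
  set lu : ℕ → ℝ := fun j => if j = i then t else (1-t)/((W:ℝ)-1) with hlu
  have hlui : lu i = t := if_pos rfl
  have hnonneg : ∀ j, j < W → 0 ≤ lu j := by
    intro j _
    by_cases hji : j = i
    · simp [hlu, hji, ht0]
    · simp only [hlu, if_neg hji]
      exact div_nonneg (by linarith) (by linarith)
  apply le_antisymm
  · have h := minC_le W hW a b hb i hi lu hnonneg (unif_sum W hW i hi t)
    rwa [hlui] at h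
  · apply Finset.le_inf'
    intro j hj
    obtain ⟨hji, hjr⟩ := Finset.mem_erase.mp hj
    have hj2W : j < 2 * W := Finset.mem_range.mp hjr
    by_cases hjW : j < W
    · have heq : cFun W a b i lu j = t * a + (1 - t) * b / ((W:ℝ)-1) := by
        rw [cFun, if_pos hjW, hlui]
        simp only [hlu, if_neg hji]
        ring
      rw [heq]; exact min_le_left _ _
    · by_cases hjiW : j = i + W
      · have heq : cFun W a b i lu j = t * a + (1 - t) * b := by
          rw [cFun, if_neg hjW, if_pos hjiW, hlui]
        rw [heq]
        refine le_trans (min_le_left _ _) ?_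
        have : (1 - t) * b / ((W:ℝ)-1) ≤ (1 - t) * b :=
          div_le_self (mul_nonneg (by linarith) hb.le) (by linarith)
        linarith
      · have hjWi : j - W ≠ i := by omega
        have heq : cFun W a b i lu j = (1 - t) * ((W:ℝ)-2) * b / ((W:ℝ)-1) := by
          rw [cFun, if_neg hjW, if_neg hjiW, hlui]
          simp only [hlu, if_neg hjWi]
          have hne : ((W:ℝ)-1) ≠ 0 := by linarith
          field_simp
          ring
        rw [heq]; exact min_le_right _ _

theorem stmt_3 (W : ℕ) (hW : 3 ≤ W) (a b : ℝ) (ha : 0 < a) (hb : 0 < b)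
    (i : ℕ) (hi : i < W) :
    sSup {x : ℝ | ∃ l : ℕ → ℝ, (∀ j, j < W → 0 ≤ l j) ∧
        (∑ j ∈ Finset.range W, l j) = 1 ∧ minC W hW a b i hi l = x} =
      sSup {x : ℝ | ∃ t ∈ Set.Icc (0 : ℝ) 1,
        min (t * a + (1 - t) * b / ((W : ℝ) - 1))
            ((1 - t) * ((W : ℝ) - 2) * b / ((W : ℝ) - 1)) = x} ∧
    ∀ t ∈ Set.Icc (0 : ℝ) 1, ∀ l : ℕ → ℝ, (∀ j, j < W → 0 ≤ l j) →
      (∑ j ∈ Finset.range W, l j) = 1 → l i = t →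
      minC W hW a b i hi l ≤
        minC W hW a b i hi (fun j => if j = i then t else (1 - t) / ((W : ℝ) - 1)) := by
  have hWr : (3:ℝ) ≤ (W:ℝ) := by exact_mod_cast hW
  have hW1 : (0:ℝ) < (W:ℝ) - 1 := by linarith
  set A := {x : ℝ | ∃ l : ℕ → ℝ, (∀ j, j < W → 0 ≤ l j) ∧
        (∑ j ∈ Finset.range W, l j) = 1 ∧ minC W hW a b i hi l = x} with hA
  set B := {x : ℝ | ∃ t ∈ Set.Icc (0 : ℝ) 1,
        min (t * a + (1 - t) * b / ((W : ℝ) - 1))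
            ((1 - t) * ((W : ℝ) - 2) * b / ((W : ℝ) - 1)) = x} with hB
  -- bound on B elements
  have hBbd : ∀ y ∈ B, y ≤ a + b := by
    rintro y ⟨t, ⟨ht0, ht1⟩, rfl⟩
    refine le_trans (min_le_left _ _) ?_
    have h1 : t * a ≤ a := by nlinarith
    have h2 : (1 - t) * b / ((W:ℝ)-1) ≤ b := by
      have : (1 - t) * b / ((W:ℝ)-1) ≤ (1 - t) * b :=
        div_le_self (mul_nonneg (by linarith) hb.le) (by linarith)
      nlinarith
    linarith
  -- each element of A is ≤ an element of B
  have hAle : ∀ x ∈ A, ∃ y ∈ B, x ≤ y := by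
    rintro x ⟨l, hl, hsum, rfl⟩
    have hli0 : 0 ≤ l i := hl i hi
    have hli1 : l i ≤ 1 := by
      have := Finset.single_le_sum (f := l) (fun j hj => hl j (Finset.mem_range.mp hj))
        (Finset.mem_range.mpr hi)
      linarith
    exact ⟨_, ⟨l i, ⟨hli0, hli1⟩, rfl⟩, minC_le W hW a b hb i hi l hl hsum⟩
  -- B ⊆ A
  have hBsubA : B ⊆ A := by
    rintro y ⟨t, ⟨ht0, ht1⟩, rfl⟩
    refine ⟨fun j => if j = i then t else (1-t)/((W:ℝ)-1), ?_, unif_sum W hW i hi t, ?_⟩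
    · intro j _
      by_cases hji : j = i
      · simp [hji, ht0]
      · simp only [if_neg hji]
        exact div_nonneg (by linarith) (by linarith)
    · exact minC_unif W hW a b hb i hi t ht0 ht1
  have hAbd : ∀ x ∈ A, x ≤ a + b := by
    intro x hx
    obtain ⟨y, hy, hxy⟩ := hAle x hx
    exact le_trans hxy (hBbd y hy)
  have hBne : B.Nonempty := ⟨_, ⟨0, ⟨le_refl 0, by norm_num⟩, rfl⟩⟩
  have hAne : A.Nonempty := hBne.mono hBsubA
  constructor
  · apply le_antisymm
    · apply csSup_le hAne
      intro x hx
      obtain ⟨y, hy, hxy⟩ := hAle x hx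
      exact le_trans hxy (le_csSup ⟨a + b, hBbd⟩ hy)
    · apply csSup_le hBne
      intro y hy
      exact le_csSup ⟨a + b, hAbd⟩ (hBsubA hy)
  · rintro t ⟨ht0, ht1⟩ l hl hsum hli
    rw [minC_unif W hW a b hb i hi t ht0 ht1]
    have := minC_le W hW a b hb i hi l hl hsum
    rwa [hli] at this
end

section
/- Let (Ω, F, P) be a probability space, let 𝒜 be a finite set, let A be an 𝒜-valued random variable, let Y be a real-valued random variable, and let G be a sub-σ-algebra of F. Let B ⊆ 𝒜 be nonempty, and for each a ∈ B let ρ_a ∈ (0,1). Assume: (i) for each a ∈ 𝒜, conditioned on the event {A = a}, Y is independent of G and E[ e^{Y} | A = a ] ≤ ρ_a for a ∈ B; (ii) Y = 0 almost surely on the event {A ∉ B}; and (iii) P( A ∈ B | G ) ≥ c almost surely, for some constant c ∈ (0,1]. Then E[ e^{Y} | G ] ≤ c · max_{a ∈ B} ρ_a + (1 − c) almost surely; in particular E[ e^{Y} | G ] < 1 almost surely. -/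
open MeasureTheory ProbabilityTheory

lemma key_condexp_indicator {Ω : Type*} (G : MeasurableSpace Ω) {mΩ : MeasurableSpace Ω}
    (P : Measure Ω) [IsProbabilityMeasure P] (hG : G ≤ mΩ)
    (Y : Ω → ℝ) (hY : Measurable Y) (t : Set Ω) (ht : MeasurableSet t)
    (hindep : Indep (MeasurableSpace.comap Y inferInstance) G (P[|t]))
    (hfint : Integrable (fun ω => Real.exp (Y ω)) P) :
    P[t.indicator (fun ω => Real.exp (Y ω))|G] =ᵐ[P]
      fun ω => (∫ ω', Real.exp (Y ω') ∂(P[|t])) * (P[t.indicator (fun _ => (1:ℝ))|G]) ω := by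
  set F : Ω → ℝ := fun ω => Real.exp (Y ω) with hF
  set m : ℝ := ∫ ω', F ω' ∂(P[|t]) with hm
  have hFmeas : Measurable F := Real.measurable_exp.comp hY
  have hind1 : Integrable (t.indicator (fun _ => (1:ℝ))) P := (integrable_const 1).indicator ht
  have hindF : Integrable (t.indicator F) P := hfint.indicator ht
  refine (ae_eq_condExp_of_forall_setIntegral_eq hG hindF ?_ ?_ ?_).symm
  · intro s _ _
    exact (integrable_condExp.const_mul m).integrableOn
  · intro s hs hPs
    have hs' : MeasurableSet s := hG s hs
    have hint1 : ∫ x in s, (P[t.indicator (fun _ => (1:ℝ))|G]) x ∂P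
        = ∫ x in s, t.indicator (fun _ => (1:ℝ)) x ∂P := setIntegral_condExp hG hind1 hs
    have hval1 : ∫ x in s, t.indicator (fun _ => (1:ℝ)) x ∂P = (P (t ∩ s)).toReal := by
      rw [integral_indicator ht, setIntegral_const, measureReal_restrict_apply ht]
      simp [measureReal_def]
    rw [integral_const_mul, hint1, hval1]
    by_cases hPt : P t = 0
    · have hcond0 : (P[|t]) = 0 := by
        simp [ProbabilityTheory.cond, Measure.restrict_eq_zero.mpr hPt]
      have hm0 : m = 0 := by simp [hm, hcond0]
      have hae : t.indicator F =ᵐ[P] 0 := by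
        have hnm : ∀ᵐ x ∂P, x ∉ t := measure_eq_zero_iff_ae_notMem.mp hPt
        filter_upwards [hnm] with x hx
        simp [Set.indicator_of_notMem hx]
      rw [hm0, zero_mul]
      symm
      apply integral_eq_zero_of_ae
      exact ae_restrict_of_ae hae
    · -- main case
      have hPt' := measure_ne_top P t
      have h1 : MeasurableSpace.comap F inferInstance ≤ MeasurableSpace.comap Y inferInstance := by
        have he : MeasurableSpace.comap F (inferInstance : MeasurableSpace ℝ)
            = MeasurableSpace.comap Y ((inferInstance : MeasurableSpace ℝ).comap Real.exp) :=
          (MeasurableSpace.comap_comp (f := Real.exp) (g := Y)).symm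
        rw [he]
        exact MeasurableSpace.comap_mono Real.measurable_exp.comap_le
      have hmi : @Measurable Ω ℝ G _ (s.indicator (fun _ => (1:ℝ))) :=
        Measurable.indicator measurable_const hs
      have h2 : MeasurableSpace.comap (s.indicator (fun _ => (1:ℝ))) inferInstance ≤ G :=
        hmi.comap_le
      have hIF : IndepFun F (s.indicator (fun _ => (1:ℝ))) (P[|t]) :=
        indep_of_indep_of_le_left (indep_of_indep_of_le_right hindep h2) h1
      have hprod : ∫ x, F x * s.indicator (fun _ => (1:ℝ)) x ∂(P[|t])
          = m * ((P[|t]) s).toReal := by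
        rw [hIF.integral_fun_mul_eq_mul_integral (hFmeas.aestronglyMeasurable)
          ((measurable_const.indicator hs').aestronglyMeasurable), ← hm]
        congr 1
        rw [show (fun _ : Ω => (1:ℝ)) = (1 : Ω → ℝ) from rfl]
        exact integral_indicator_one hs'
      have hdef : (P[|t]) = (P t)⁻¹ • P.restrict t := rfl
      have hcondint : ∫ x, F x * s.indicator (fun _ => (1:ℝ)) x ∂(P[|t])
          = (P t).toReal⁻¹ * ∫ x in s, t.indicator F x ∂P := by
        rw [hdef, integral_smul_measure, ENNReal.toReal_inv, smul_eq_mul]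
        congr 1
        have he : (fun x => F x * s.indicator (fun _ => (1:ℝ)) x) = s.indicator F := by
          funext x
          by_cases hx : x ∈ s <;> simp [Set.indicator_apply, hx]
        rw [he, integral_indicator hs', Measure.restrict_restrict hs',
          integral_indicator ht, Measure.restrict_restrict ht, Set.inter_comm]
      have hconds : ((P[|t]) s).toReal = (P t).toReal⁻¹ * (P (t ∩ s)).toReal := by
        rw [cond_apply ht, ENNReal.toReal_mul, ENNReal.toReal_inv]
      have hPtR : (P t).toReal ≠ 0 := by
        simp [ENNReal.toReal_eq_zero_iff, hPt, hPt']
      rw [hcondint, hconds] at hprod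
      field_simp at hprod ⊢
      linarith [hprod]
  · exact ((stronglyMeasurable_condExp.const_smul m).aestronglyMeasurable).congr
      (Filter.Eventually.of_forall fun ω => rfl)

lemma main_aux {Ω : Type*} (G : MeasurableSpace Ω) {mΩ : MeasurableSpace Ω}
    (P : Measure Ω) [IsProbabilityMeasure P]
    {𝒜 : Type*} [Fintype 𝒜] [MeasurableSpace 𝒜] [MeasurableSingletonClass 𝒜]
    (A : Ω → 𝒜) (hA : Measurable A) (Y : Ω → ℝ) (hY : Measurable Y)
    (hG : G ≤ mΩ)
    (B : Finset 𝒜) (hB : B.Nonempty)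
    (ρ : 𝒜 → ℝ) (hρ : ∀ a ∈ B, ρ a ∈ Set.Ioo (0 : ℝ) 1)
    (c : ℝ) (hc : c ∈ Set.Ioc (0 : ℝ) 1)
    (hindep : ∀ a : 𝒜,
      Indep (MeasurableSpace.comap Y inferInstance) G (P[|A ⁻¹' {a}]))
    (hratio : ∀ a ∈ B, ∫ ω, Real.exp (Y ω) ∂(P[|A ⁻¹' {a}]) ≤ ρ a)
    (hzero : ∀ᵐ ω ∂P, A ω ∉ B → Y ω = 0)
    (hcond : ∀ᵐ ω ∂P, c ≤ (P[(A ⁻¹' ↑B).indicator (fun _ => (1 : ℝ)) | G]) ω) :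
    (∀ᵐ ω ∂P, (P[fun ω' => Real.exp (Y ω') | G]) ω ≤ c * B.sup' hB ρ + (1 - c)) ∧
    (∀ᵐ ω ∂P, (P[fun ω' => Real.exp (Y ω') | G]) ω < 1) := by
  have hr1 : B.sup' hB ρ < 1 := (Finset.sup'_lt_iff hB).mpr fun a ha => (hρ a ha).2
  obtain ⟨b₀, hb₀⟩ := id hB
  have hr0 : (0:ℝ) < B.sup' hB ρ := lt_of_lt_of_le (hρ b₀ hb₀).1 (Finset.le_sup' ρ hb₀)
  set r : ℝ := B.sup' hB ρ with hr
  have hbound : c * r + (1 - c) < 1 := by nlinarith [hc.1, hc.2]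
  suffices h : ∀ᵐ ω ∂P, (P[fun ω' => Real.exp (Y ω') | G]) ω ≤ c * r + (1 - c) by
    exact ⟨h, h.mono fun ω hω => lt_of_le_of_lt hω hbound⟩
  by_cases hfint : Integrable (fun ω => Real.exp (Y ω)) P
  swap
  · rw [condExp_of_not_integrable hfint]
    apply Filter.Eventually.of_forall
    intro ω
    simp only [Pi.zero_apply]
    nlinarith [hc.1, hc.2]
  · have hU : MeasurableSet (A ⁻¹' ↑B) := hA B.finite_toSet.measurableSet
    have ht : ∀ a : 𝒜, MeasurableSet (A ⁻¹' {a}) := fun a => hA (measurableSet_singleton a)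
    have hintInd : ∀ a : 𝒜, Integrable ((A ⁻¹' {a}).indicator fun ω => Real.exp (Y ω)) P :=
      fun a => hfint.indicator (ht a)
    have hintC : Integrable ((A ⁻¹' ↑B)ᶜ.indicator fun ω => Real.exp (Y ω)) P :=
      hfint.indicator hU.compl
    -- pointwise sum of indicators
    have hpoint : ∀ (g : Ω → ℝ) (ω : Ω),
        (∑ a ∈ B, (A ⁻¹' {a}).indicator g ω) = (A ⁻¹' ↑B).indicator g ω := by
      intro g ω
      by_cases hω : A ω ∈ B
      · have hm1 : ω ∈ A ⁻¹' {A ω} := Set.mem_preimage.mpr (Set.mem_singleton _)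
        have hm2 : ω ∈ A ⁻¹' (↑B : Set 𝒜) := by simpa using hω
        rw [Finset.sum_eq_single_of_mem (A ω) hω
            (fun b _ hb => Set.indicator_of_notMem
              (fun hmem => hb (by simpa using hmem : A ω = b).symm) g),
          Set.indicator_of_mem hm1 g, Set.indicator_of_mem hm2 g]
      · have hm2 : ω ∉ A ⁻¹' (↑B : Set 𝒜) := by simpa using hω
        rw [Finset.sum_eq_zero (fun b hb => Set.indicator_of_notMem
            (fun hmem => hω (by rw [(by simpa using hmem : A ω = b)]; exact hb)) g),
          Set.indicator_of_notMem hm2 g]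
    -- decomposition
    have hdecomp : (fun ω => Real.exp (Y ω))
        = (∑ a ∈ B, (A ⁻¹' {a}).indicator fun ω => Real.exp (Y ω))
          + (A ⁻¹' ↑B)ᶜ.indicator fun ω => Real.exp (Y ω) := by
      funext ω
      rw [Pi.add_apply, Finset.sum_apply, hpoint]
      exact (congrFun (Set.indicator_self_add_compl (A ⁻¹' ↑B) fun ω => Real.exp (Y ω)) ω).symm
    have hstep := condExp_add (m := G) (μ := P)
      (integrable_finset_sum' B (fun a _ => hintInd a)) hintC
    rw [← hdecomp] at hstep
    have hsum := condExp_finset_sum (m := G) (μ := P) (s := B)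
      (f := fun a => (A ⁻¹' {a}).indicator fun ω => Real.exp (Y ω)) (fun a _ => hintInd a)
    have hkey : ∀ᵐ ω ∂P, ∀ a ∈ B,
        (P[(A ⁻¹' {a}).indicator fun ω' => Real.exp (Y ω')|G]) ω
          = (∫ ω', Real.exp (Y ω') ∂(P[|A ⁻¹' {a}]))
            * (P[(A ⁻¹' {a}).indicator (fun _ => (1:ℝ))|G]) ω :=
      (ae_ball_iff B.countable_toSet).mpr
        (fun a _ => key_condexp_indicator G P hG Y hY _ (ht a) (hindep a) hfint)
    have hκnn : ∀ᵐ ω ∂P, ∀ a ∈ B,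
        0 ≤ (P[(A ⁻¹' {a}).indicator (fun _ => (1:ℝ))|G]) ω :=
      (ae_ball_iff B.countable_toSet).mpr (fun a _ => condExp_nonneg
        (Filter.Eventually.of_forall fun ω => Set.indicator_nonneg (fun _ _ => zero_le_one) ω))
    have hsumκ : (∑ a ∈ B, (A ⁻¹' {a}).indicator (fun _ => (1:ℝ)))
        = (A ⁻¹' ↑B).indicator (fun _ => (1:ℝ)) := by
      funext ω
      rw [Finset.sum_apply, hpoint]
    have hκsum := condExp_finset_sum (m := G) (μ := P) (s := B)
      (f := fun a => (A ⁻¹' {a}).indicator (fun _ => (1:ℝ)))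
      (fun a _ => (integrable_const (1:ℝ)).indicator (ht a))
    rw [hsumκ] at hκsum
    -- complement part
    have hzero' : ((A ⁻¹' ↑B)ᶜ.indicator fun ω => Real.exp (Y ω))
        =ᵐ[P] (A ⁻¹' ↑B)ᶜ.indicator (fun _ => (1:ℝ)) := by
      filter_upwards [hzero] with ω hω
      by_cases hωU : ω ∈ A ⁻¹' (↑B : Set 𝒜)
      · simp [Set.indicator_of_notMem, hωU]
      · have hAB : A ω ∉ B := by
          simpa [Set.mem_preimage, Finset.mem_coe] using hωU
        simp [Set.indicator_of_mem, hωU, hω hAB]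
    have hC1 : P[(A ⁻¹' ↑B)ᶜ.indicator fun ω => Real.exp (Y ω)|G]
        =ᵐ[P] P[(A ⁻¹' ↑B)ᶜ.indicator (fun _ => (1:ℝ))|G] := condExp_congr_ae hzero'
    have hcompl : (A ⁻¹' ↑B)ᶜ.indicator (fun _ => (1:ℝ))
        = (fun _ => (1:ℝ)) - (A ⁻¹' ↑B).indicator (fun _ => (1:ℝ)) := by
      funext ω
      by_cases hω : ω ∈ A ⁻¹' (↑B : Set 𝒜) <;> simp [Set.indicator_apply, hω]
    have hC2 := condExp_sub (m := G) (μ := P) (integrable_const (1:ℝ))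
      ((integrable_const (1:ℝ)).indicator hU)
    rw [← hcompl] at hC2
    have hconst : P[(fun _ => (1:ℝ))|G] = fun _ => (1:ℝ) := condExp_const hG 1
    have hm : ∀ a ∈ B, (∫ ω', Real.exp (Y ω') ∂(P[|A ⁻¹' {a}])) ≤ r :=
      fun a ha => (hratio a ha).trans (Finset.le_sup' ρ ha)
    filter_upwards [hstep, hsum, hkey, hκnn, hκsum, hC1, hC2, hcond] with ω
      h1 h2 h3 h4 h5 h6 h7 h8
    set K : ℝ := (P[(A ⁻¹' ↑B).indicator (fun _ => (1:ℝ))|G]) ω with hK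
    have h5' : K = ∑ a ∈ B, (P[(A ⁻¹' {a}).indicator (fun _ => (1:ℝ))|G]) ω := by
      rw [h5, Finset.sum_apply]
    have hC : (P[(A ⁻¹' ↑B)ᶜ.indicator fun ω' => Real.exp (Y ω')|G]) ω = 1 - K := by
      rw [h6, h7, Pi.sub_apply, hconst]
    have hS : (P[∑ a ∈ B, (A ⁻¹' {a}).indicator fun ω' => Real.exp (Y ω')|G]) ω
        = ∑ a ∈ B, (P[(A ⁻¹' {a}).indicator fun ω' => Real.exp (Y ω')|G]) ω := by
      rw [h2, Finset.sum_apply]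
    have hmain : (P[fun ω' => Real.exp (Y ω')|G]) ω
        = (∑ a ∈ B, (∫ ω', Real.exp (Y ω') ∂(P[|A ⁻¹' {a}]))
            * (P[(A ⁻¹' {a}).indicator (fun _ => (1:ℝ))|G]) ω) + (1 - K) := by
      rw [h1, Pi.add_apply, hS, hC]
      congr 1
      exact Finset.sum_congr rfl h3
    have hsum_le : (∑ a ∈ B, (∫ ω', Real.exp (Y ω') ∂(P[|A ⁻¹' {a}]))
            * (P[(A ⁻¹' {a}).indicator (fun _ => (1:ℝ))|G]) ω) ≤ r * K := by
      rw [h5', Finset.mul_sum]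
      exact Finset.sum_le_sum fun a ha =>
        mul_le_mul_of_nonneg_right (hm a ha) (h4 a ha)
    rw [hmain]
    nlinarith [h8, hr1]

theorem stmt_6 {Ω : Type*} {mΩ : MeasurableSpace Ω} (P : Measure Ω) [IsProbabilityMeasure P]
    {𝒜 : Type*} [Fintype 𝒜] [MeasurableSpace 𝒜] [MeasurableSingletonClass 𝒜]
    (A : Ω → 𝒜) (hA : Measurable A) (Y : Ω → ℝ) (hY : Measurable Y)
    (G : MeasurableSpace Ω) (hG : G ≤ mΩ)
    (B : Finset 𝒜) (hB : B.Nonempty)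
    (ρ : 𝒜 → ℝ) (hρ : ∀ a ∈ B, ρ a ∈ Set.Ioo (0 : ℝ) 1)
    (c : ℝ) (hc : c ∈ Set.Ioc (0 : ℝ) 1)
    -- (i) conditioned on {A = a}, Y is independent of G ...
    (hindep : ∀ a : 𝒜,
      Indep (MeasurableSpace.comap Y inferInstance) G (P[|A ⁻¹' {a}]))
    -- ... and E[e^Y | A = a] ≤ ρ_a for a ∈ B
    (hratio : ∀ a ∈ B, ∫ ω, Real.exp (Y ω) ∂(P[|A ⁻¹' {a}]) ≤ ρ a)
    -- (ii) Y = 0 a.s. on {A ∉ B}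
    (hzero : ∀ᵐ ω ∂P, A ω ∉ B → Y ω = 0)
    -- (iii) P(A ∈ B | G) ≥ c a.s.
    (hcond : ∀ᵐ ω ∂P, c ≤ (P[(A ⁻¹' ↑B).indicator (fun _ => (1 : ℝ)) | G]) ω) :
    (∀ᵐ ω ∂P, (P[fun ω' => Real.exp (Y ω') | G]) ω ≤ c * B.sup' hB ρ + (1 - c)) ∧
    (∀ᵐ ω ∂P, (P[fun ω' => Real.exp (Y ω') | G]) ω < 1) := by
  exact main_aux G P A hA Y hY hG B hB ρ hρ c hc hindep hratio hzero hcond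
end
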